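/- Let m ≥ 1 and let S ⊂ ℤ² be a set of representatives of the nonzero equivalence classes {k, −k} with |k| ≤ m. Suppose λ(|k|) = λ(|k'|) whenever |k| = |k'|. Then for every f ∈ C²(𝕋²), Σ_{k ∈ S, |k| ≤ m} (A_k A_k f + B_k B_k f) = ν Δf, where X f denotes the derivative of f along the vector field X, applied twice, Δ is the Laplacian on 𝕋², and ν = ½ Σ_{k ∈ S, |k| ≤ m} λ(|k|)² |k|_2², with |k|_2² = k_1² + k_2². -/

import Mathlib

noncomputable section

/-- Partial derivative in the first variable. -/
def p1 (f : ℝ → ℝ → ℝ) (x y : ℝ) : ℝ := deriv (fun s => f s y) x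

/-- Partial derivative in the second variable. -/
def p2 (f : ℝ → ℝ → ℝ) (x y : ℝ) : ℝ := deriv (fun s => f x s) y

/-- First component of the vector field `A_k = λ(|k|)(k₂cos(k·θ), −k₁cos(k·θ))` on `𝕋²`. -/
def A1 (k : ℤ × ℤ) (lam : ℝ) (x y : ℝ) : ℝ :=
  lam * ((k.2 : ℝ) * Real.cos ((k.1 : ℝ) * x + (k.2 : ℝ) * y))

/-- Second component of `A_k`. -/
def A2 (k : ℤ × ℤ) (lam : ℝ) (x y : ℝ) : ℝ :=
  lam * (-(k.1 : ℝ) * Real.cos ((k.1 : ℝ) * x + (k.2 : ℝ) * y))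

/-- First component of the vector field `B_k = λ(|k|)(k₂sin(k·θ), −k₁sin(k·θ))` on `𝕋²`. -/
def B1 (k : ℤ × ℤ) (lam : ℝ) (x y : ℝ) : ℝ :=
  lam * ((k.2 : ℝ) * Real.sin ((k.1 : ℝ) * x + (k.2 : ℝ) * y))

/-- Second component of `B_k`. -/
def B2 (k : ℤ × ℤ) (lam : ℝ) (x y : ℝ) : ℝ :=
  lam * (-(k.1 : ℝ) * Real.sin ((k.1 : ℝ) * x + (k.2 : ℝ) * y))

/-- Derivative of a function along the vector field `A_k`: `(A_k f)(θ) = A_k¹∂₁f + A_k²∂₂f`. -/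
def Aop (k : ℤ × ℤ) (lam : ℝ) (f : ℝ → ℝ → ℝ) (x y : ℝ) : ℝ :=
  A1 k lam x y * p1 f x y + A2 k lam x y * p2 f x y

/-- Derivative of a function along the vector field `B_k`. -/
def Bop (k : ℤ × ℤ) (lam : ℝ) (f : ℝ → ℝ → ℝ) (x y : ℝ) : ℝ :=
  B1 k lam x y * p1 f x y + B2 k lam x y * p2 f x y

/-- If `S` contains exactly one representative of each equivalence class `{k,−k}` of nonzero
`k ∈ ℤ²` with `|k| = |k₁|+|k₂| ≤ m`, and `λ` depends only on `|k|`, then for every `f ∈ C²(𝕋²)`,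
`Σ_{k∈S} (A_kA_k f + B_kB_k f) = ν Δf` with `ν = ½ Σ_{k∈S} λ(|k|)² (k₁² + k₂²)`. -/
lemma key (k : ℤ × ℤ) (lam : ℝ) (f : ℝ → ℝ → ℝ)
    (hf : ContDiff ℝ 2 (fun p : ℝ × ℝ => f p.1 p.2)) (x y : ℝ) :
    Aop k lam (Aop k lam f) x y + Bop k lam (Bop k lam f) x y
      = lam ^ 2 * ((k.2 : ℝ) ^ 2 * p1 (p1 f) x y
        - (k.1 : ℝ) * (k.2 : ℝ) * (p1 (p2 f) x y + p2 (p1 f) x y)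
        + (k.1 : ℝ) ^ 2 * p2 (p2 f) x y) := by
  set k1 : ℝ := (k.1 : ℝ) with hk1
  set k2 : ℝ := (k.2 : ℝ) with hk2
  set F : ℝ × ℝ → ℝ := fun p => f p.1 p.2 with hF
  have hFd : Differentiable ℝ F := hf.differentiable (by norm_num)
  set G1 : ℝ × ℝ → ℝ := fun p => fderiv ℝ F p (1, 0) with hG1def
  set G2 : ℝ × ℝ → ℝ := fun p => fderiv ℝ F p (0, 1) with hG2def
  have hfd : ContDiff ℝ 1 (fderiv ℝ F) := hf.fderiv_right (le_refl 2)
  have hG1 : Differentiable ℝ G1 :=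
    (hfd.clm_apply contDiff_const).differentiable one_ne_zero
  have hG2 : Differentiable ℝ G2 :=
    (hfd.clm_apply contDiff_const).differentiable one_ne_zero
  -- curves
  have hcurve1 : ∀ a b : ℝ, HasDerivAt (fun s : ℝ => (s, b)) ((1 : ℝ), (0 : ℝ)) a :=
    fun a b => (hasDerivAt_id a).prodMk (hasDerivAt_const a b)
  have hcurve2 : ∀ a b : ℝ, HasDerivAt (fun s : ℝ => (a, s)) ((0 : ℝ), (1 : ℝ)) b :=
    fun a b => (hasDerivAt_const b a).prodMk (hasDerivAt_id b)
  -- first partials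
  have hp1 : ∀ a b : ℝ, p1 f a b = G1 (a, b) := by
    intro a b
    exact ((hFd (a, b)).hasFDerivAt.comp_hasDerivAt a (hcurve1 a b)).deriv
  have hp2 : ∀ a b : ℝ, p2 f a b = G2 (a, b) := by
    intro a b
    exact ((hFd (a, b)).hasFDerivAt.comp_hasDerivAt b (hcurve2 a b)).deriv
  -- slices of first partials have derivatives
  have hs11 : ∀ a b : ℝ, HasDerivAt (fun s => p1 f s b) (fderiv ℝ G1 (a, b) (1, 0)) a := by
    intro a b
    have h := (hG1 (a, b)).hasFDerivAt.comp_hasDerivAt a (hcurve1 a b)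
    have e : (fun s => p1 f s b) = fun s => G1 (s, b) := funext fun s => hp1 s b
    rw [e]; exact h
  have hs21 : ∀ a b : ℝ, HasDerivAt (fun t => p1 f a t) (fderiv ℝ G1 (a, b) (0, 1)) b := by
    intro a b
    have h := (hG1 (a, b)).hasFDerivAt.comp_hasDerivAt b (hcurve2 a b)
    have e : (fun t => p1 f a t) = fun t => G1 (a, t) := funext fun t => hp1 a t
    rw [e]; exact h
  have hs12 : ∀ a b : ℝ, HasDerivAt (fun s => p2 f s b) (fderiv ℝ G2 (a, b) (1, 0)) a := by
    intro a b
    have h := (hG2 (a, b)).hasFDerivAt.comp_hasDerivAt a (hcurve1 a b)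
    have e : (fun s => p2 f s b) = fun s => G2 (s, b) := funext fun s => hp2 s b
    rw [e]; exact h
  have hs22 : ∀ a b : ℝ, HasDerivAt (fun t => p2 f a t) (fderiv ℝ G2 (a, b) (0, 1)) b := by
    intro a b
    have h := (hG2 (a, b)).hasFDerivAt.comp_hasDerivAt b (hcurve2 a b)
    have e : (fun t => p2 f a t) = fun t => G2 (a, t) := funext fun t => hp2 a t
    rw [e]; exact h
  set D11 : ℝ := fderiv ℝ G1 (x, y) (1, 0) with hD11
  set D21 : ℝ := fderiv ℝ G1 (x, y) (0, 1) with hD21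
  set D12 : ℝ := fderiv ℝ G2 (x, y) (1, 0) with hD12
  set D22 : ℝ := fderiv ℝ G2 (x, y) (0, 1) with hD22
  -- second partials identified
  have e11 : p1 (p1 f) x y = D11 := (hs11 x y).deriv
  have e21 : p2 (p1 f) x y = D21 := (hs21 x y).deriv
  have e12 : p1 (p2 f) x y = D12 := (hs12 x y).deriv
  have e22 : p2 (p2 f) x y = D22 := (hs22 x y).deriv
  -- trigonometric slice derivatives
  set φ : ℝ := k1 * x + k2 * y with hφ
  have haffx : HasDerivAt (fun s : ℝ => k1 * s + k2 * y) (k1 * 1) x :=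
    ((hasDerivAt_id x).const_mul k1).add_const (k2 * y)
  have haffy : HasDerivAt (fun t : ℝ => k1 * x + k2 * t) (k2 * 1) y :=
    ((hasDerivAt_id y).const_mul k2).const_add (k1 * x)
  have hcosx : HasDerivAt (fun s : ℝ => Real.cos (k1 * s + k2 * y)) (-Real.sin φ * (k1 * 1)) x :=
    by exact (Real.hasDerivAt_cos φ).comp x haffx
  have hcosy : HasDerivAt (fun t : ℝ => Real.cos (k1 * x + k2 * t)) (-Real.sin φ * (k2 * 1)) y :=
    by exact (Real.hasDerivAt_cos φ).comp y haffy
  have hsinx : HasDerivAt (fun s : ℝ => Real.sin (k1 * s + k2 * y)) (Real.cos φ * (k1 * 1)) x :=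
    by exact (Real.hasDerivAt_sin φ).comp x haffx
  have hsiny : HasDerivAt (fun t : ℝ => Real.sin (k1 * x + k2 * t)) (Real.cos φ * (k2 * 1)) y :=
    by exact (Real.hasDerivAt_sin φ).comp y haffy
  -- p1 of Aop f
  have hA1x : p1 (Aop k lam f) x y =
      (lam * (k2 * (-Real.sin φ * (k1 * 1)))) * p1 f x y
        + (lam * (k2 * Real.cos φ)) * D11
        + ((lam * (-k1 * (-Real.sin φ * (k1 * 1)))) * p2 f x y
        + (lam * (-k1 * Real.cos φ)) * D12) := by
    exact ((((hcosx.const_mul k2).const_mul lam).mul (hs11 x y)).add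
      (((hcosx.const_mul (-k1)).const_mul lam).mul (hs12 x y))).deriv
  have hA2y : p2 (Aop k lam f) x y =
      (lam * (k2 * (-Real.sin φ * (k2 * 1)))) * p1 f x y
        + (lam * (k2 * Real.cos φ)) * D21
        + ((lam * (-k1 * (-Real.sin φ * (k2 * 1)))) * p2 f x y
        + (lam * (-k1 * Real.cos φ)) * D22) := by
    exact ((((hcosy.const_mul k2).const_mul lam).mul (hs21 x y)).add
      (((hcosy.const_mul (-k1)).const_mul lam).mul (hs22 x y))).deriv
  have hB1x : p1 (Bop k lam f) x y =
      (lam * (k2 * (Real.cos φ * (k1 * 1)))) * p1 f x y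
        + (lam * (k2 * Real.sin φ)) * D11
        + ((lam * (-k1 * (Real.cos φ * (k1 * 1)))) * p2 f x y
        + (lam * (-k1 * Real.sin φ)) * D12) := by
    exact ((((hsinx.const_mul k2).const_mul lam).mul (hs11 x y)).add
      (((hsinx.const_mul (-k1)).const_mul lam).mul (hs12 x y))).deriv
  have hB2y : p2 (Bop k lam f) x y =
      (lam * (k2 * (Real.cos φ * (k2 * 1)))) * p1 f x y
        + (lam * (k2 * Real.sin φ)) * D21
        + ((lam * (-k1 * (Real.cos φ * (k2 * 1)))) * p2 f x y
        + (lam * (-k1 * Real.sin φ)) * D22) := by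
    exact ((((hsiny.const_mul k2).const_mul lam).mul (hs21 x y)).add
      (((hsiny.const_mul (-k1)).const_mul lam).mul (hs22 x y))).deriv
  have hpyth : Real.sin φ ^ 2 + Real.cos φ ^ 2 = 1 := Real.sin_sq_add_cos_sq φ
  show A1 k lam x y * p1 (Aop k lam f) x y + A2 k lam x y * p2 (Aop k lam f) x y
      + (B1 k lam x y * p1 (Bop k lam f) x y + B2 k lam x y * p2 (Bop k lam f) x y) = _
  rw [hA1x, hA2y, hB1x, hB2y, e11, e21, e12, e22]
  show lam * (k2 * Real.cos (k1 * x + k2 * y)) * _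
      + lam * (-k1 * Real.cos (k1 * x + k2 * y)) * _
      + (lam * (k2 * Real.sin (k1 * x + k2 * y)) * _
      + lam * (-k1 * Real.sin (k1 * x + k2 * y)) * _) = _
  rw [← hφ]
  linear_combination (lam ^ 2 * (k2 ^ 2 * D11 - k1 * k2 * D12 - k1 * k2 * D21 + k1 ^ 2 * D22)) * hpyth

theorem sum_AkAk_BkBk_eq_laplacian (m : ℕ) (hm : 1 ≤ m) (lam : ℕ → ℝ)
    (S : Finset (ℤ × ℤ))
    (hrep : ∀ k : ℤ × ℤ, k ≠ 0 → k.1.natAbs + k.2.natAbs ≤ m → (k ∈ S ↔ ¬ (-k ∈ S)))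
    (hmem : ∀ k ∈ S, k ≠ (0 : ℤ × ℤ) ∧ k.1.natAbs + k.2.natAbs ≤ m)
    (f : ℝ → ℝ → ℝ) (hf : ContDiff ℝ 2 (fun p : ℝ × ℝ => f p.1 p.2)) (x y : ℝ) :
    ∑ k ∈ S, (Aop k (lam (k.1.natAbs + k.2.natAbs))
          (Aop k (lam (k.1.natAbs + k.2.natAbs)) f) x y
        + Bop k (lam (k.1.natAbs + k.2.natAbs))
          (Bop k (lam (k.1.natAbs + k.2.natAbs)) f) x y) =
      ((1 : ℝ)/2 * ∑ k ∈ S, (lam (k.1.natAbs + k.2.natAbs)) ^ 2 * ((k.1 : ℝ) ^ 2 + (k.2 : ℝ) ^ 2))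
        * (p1 (p1 f) x y + p2 (p2 f) x y) := by
  set L : ℤ × ℤ → ℝ := fun k => (lam (k.1.natAbs + k.2.natAbs)) ^ 2 with hL
  set Sneg : Finset (ℤ × ℤ) := S.image (fun k => -k) with hSneg
  have hdisj : Disjoint S Sneg := by
    rw [Finset.disjoint_left]
    intro k hk hk'
    obtain ⟨j, hj, hjk⟩ := Finset.mem_image.mp hk'
    have hnk : -k ∈ S := by rw [← hjk, neg_neg]; exact hj
    exact ((hrep k (hmem k hk).1 (hmem k hk).2).mp hk) hnk
  set U : Finset (ℤ × ℤ) := S ∪ Sneg with hUdef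
  have hU : ∀ k : ℤ × ℤ, k ∈ U ↔ (k ≠ 0 ∧ k.1.natAbs + k.2.natAbs ≤ m) := by
    intro k
    constructor
    · intro hk
      rcases Finset.mem_union.mp hk with h | h
      · exact hmem k h
      · obtain ⟨j, hj, hjk⟩ := Finset.mem_image.mp h
        obtain ⟨h0, hle⟩ := hmem j hj
        subst hjk
        refine ⟨by simpa using h0, ?_⟩
        simpa [Int.natAbs_neg] using hle
    · rintro ⟨h0, hle⟩
      by_cases hk : k ∈ S
      · exact Finset.mem_union.mpr (Or.inl hk)
      · have : -k ∈ S := by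
          by_contra hnk
          exact hk ((hrep k h0 hle).mpr hnk)
        exact Finset.mem_union.mpr (Or.inr (Finset.mem_image.mpr ⟨-k, this, neg_neg k⟩))
  have hsum2 : ∀ g : ℤ × ℤ → ℝ, (∀ k, g (-k) = g k) →
      ∑ k ∈ U, g k = 2 * ∑ k ∈ S, g k := by
    intro g hg
    rw [hUdef, Finset.sum_union hdisj, hSneg,
      Finset.sum_image (fun a _ b _ h => neg_injective h)]
    simp only [hg]
    ring
  have hsigma : ∀ g : ℤ × ℤ → ℝ, ∑ k ∈ U, g (k.2, -k.1) = ∑ k ∈ U, g k := by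
    intro g
    refine Finset.sum_nbij' (fun k => (k.2, -k.1)) (fun k => (-k.2, k.1)) ?_ ?_ ?_ ?_ ?_
    · intro a ha
      obtain ⟨h0, hle⟩ := (hU a).mp ha
      refine (hU _).mpr ⟨?_, by simpa [Int.natAbs_neg, add_comm] using hle⟩
      obtain ⟨a1, a2⟩ := a
      simp only [ne_eq, Prod.ext_iff, Prod.fst_zero, Prod.snd_zero] at h0 ⊢
      omega
    · intro a ha
      obtain ⟨h0, hle⟩ := (hU a).mp ha
      refine (hU _).mpr ⟨?_, by simpa [Int.natAbs_neg, add_comm] using hle⟩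
      obtain ⟨a1, a2⟩ := a
      simp only [ne_eq, Prod.ext_iff, Prod.fst_zero, Prod.snd_zero] at h0 ⊢
      omega
    · intro a _; simp
    · intro a _; simp
    · intro a _; rfl
  have hLneg : ∀ k : ℤ × ℤ, L (-k) = L k := by
    intro k; simp [hL, Int.natAbs_neg]
  have hLsig : ∀ k : ℤ × ℤ, L (k.2, -k.1) = L k := by
    intro k; simp [hL, Int.natAbs_neg, add_comm]
  -- cross sum vanishes
  have hcross : ∑ k ∈ S, L k * ((k.1 : ℝ) * (k.2 : ℝ)) = 0 := by
    have heven : ∀ k : ℤ × ℤ, L (-k) * (((-k).1 : ℝ) * ((-k).2 : ℝ))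
        = L k * ((k.1 : ℝ) * (k.2 : ℝ)) := by
      intro k
      rw [hLneg, Prod.fst_neg, Prod.snd_neg]
      push_cast
      ring
    have h2 := hsum2 (fun k => L k * ((k.1 : ℝ) * (k.2 : ℝ))) heven
    have h6 : ∑ k ∈ U, L k * ((k.1 : ℝ) * (k.2 : ℝ))
        = -∑ k ∈ U, L k * ((k.1 : ℝ) * (k.2 : ℝ)) := by
      conv_lhs => rw [← hsigma (fun k => L k * ((k.1 : ℝ) * (k.2 : ℝ)))]
      rw [← Finset.sum_neg_distrib]
      refine Finset.sum_congr rfl fun k _ => ?_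
      simp only [hLsig]
      push_cast
      ring
    have h7 : ∑ k ∈ U, L k * ((k.1 : ℝ) * (k.2 : ℝ)) = 0 := by linarith
    rw [h7] at h2
    linarith
  -- equal square sums
  have hsq : ∑ k ∈ S, L k * (k.2 : ℝ) ^ 2 = ∑ k ∈ S, L k * (k.1 : ℝ) ^ 2 := by
    have heven2 : ∀ k : ℤ × ℤ, L (-k) * (((-k).2 : ℝ)) ^ 2 = L k * ((k.2 : ℝ)) ^ 2 := by
      intro k; rw [hLneg, Prod.snd_neg]; push_cast; ring
    have heven1 : ∀ k : ℤ × ℤ, L (-k) * (((-k).1 : ℝ)) ^ 2 = L k * ((k.1 : ℝ)) ^ 2 := by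
      intro k; rw [hLneg, Prod.fst_neg]; push_cast; ring
    have h2 := hsum2 (fun k => L k * ((k.2 : ℝ)) ^ 2) heven2
    have h1 := hsum2 (fun k => L k * ((k.1 : ℝ)) ^ 2) heven1
    have h4 : ∑ k ∈ U, L k * ((k.1 : ℝ)) ^ 2 = ∑ k ∈ U, L k * ((k.2 : ℝ)) ^ 2 := by
      conv_lhs => rw [← hsigma (fun k => L k * ((k.1 : ℝ)) ^ 2)]
      refine Finset.sum_congr rfl fun k _ => ?_
      simp only [hLsig]
    rw [h4, h2] at h1
    linarith
  -- rewrite each term via key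
  rw [Finset.sum_congr rfl (fun k _ => key k (lam (k.1.natAbs + k.2.natAbs)) f hf x y)]
  set D11 := p1 (p1 f) x y
  set D12 := p1 (p2 f) x y
  set D21 := p2 (p1 f) x y
  set D22 := p2 (p2 f) x y
  have hexp : ∑ k ∈ S, L k * ((k.2 : ℝ) ^ 2 * D11
        - (k.1 : ℝ) * (k.2 : ℝ) * (D12 + D21) + (k.1 : ℝ) ^ 2 * D22)
      = (∑ k ∈ S, L k * (k.2 : ℝ) ^ 2) * D11
        - (∑ k ∈ S, L k * ((k.1 : ℝ) * (k.2 : ℝ))) * (D12 + D21)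
        + (∑ k ∈ S, L k * (k.1 : ℝ) ^ 2) * D22 := by
    rw [Finset.sum_mul, Finset.sum_mul, Finset.sum_mul, ← Finset.sum_sub_distrib,
      ← Finset.sum_add_distrib]
    exact Finset.sum_congr rfl fun k _ => by ring
  have hnu : (1 : ℝ)/2 * ∑ k ∈ S, L k * ((k.1 : ℝ) ^ 2 + (k.2 : ℝ) ^ 2)
      = ∑ k ∈ S, L k * (k.1 : ℝ) ^ 2 := by
    have : ∑ k ∈ S, L k * ((k.1 : ℝ) ^ 2 + (k.2 : ℝ) ^ 2)
        = ∑ k ∈ S, L k * (k.1 : ℝ) ^ 2 + ∑ k ∈ S, L k * (k.2 : ℝ) ^ 2 := by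
      rw [← Finset.sum_add_distrib]
      exact Finset.sum_congr rfl fun k _ => by ring
    rw [this, hsq]; ring
  calc ∑ k ∈ S, L k * ((k.2 : ℝ) ^ 2 * D11
        - (k.1 : ℝ) * (k.2 : ℝ) * (D12 + D21) + (k.1 : ℝ) ^ 2 * D22)
      = (∑ k ∈ S, L k * (k.2 : ℝ) ^ 2) * D11
        - (∑ k ∈ S, L k * ((k.1 : ℝ) * (k.2 : ℝ))) * (D12 + D21)
        + (∑ k ∈ S, L k * (k.1 : ℝ) ^ 2) * D22 := hexp
    _ = (∑ k ∈ S, L k * (k.1 : ℝ) ^ 2) * (D11 + D22) := by rw [hsq, hcross]; ring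
    _ = ((1 : ℝ)/2 * ∑ k ∈ S, L k * ((k.1 : ℝ) ^ 2 + (k.2 : ℝ) ^ 2)) * (D11 + D22) := by
        rw [hnu]
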